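/- (Auxiliary Theorem.) Let H and I be finite nonempty types. Then the set of parameter triples (α, β, γ) ∈ (H × I → ℝ) × (I × H → ℝ) × (H → ℝ) for which there exist i, j ∈ I with (Σ_{h} γ(h)·β(j,h)) · (Σ_{h} α(h,i)·γ(h)·β(i,h)) = (Σ_{h} γ(h)·β(i,h)) · (Σ_{h} α(h,j)·γ(h)·β(j,h)) and Σ_{h} α(h,i)·γ(h) ≠ Σ_{h} α(h,j)·γ(h) has Lebesgue measure zero in the full parameter space ℝ^{|H|·|I|} × ℝ^{|I|·|H|} × ℝ^{|H|}. -/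

import Mathlib

open MeasureTheory

section PolyNull

open MvPolynomial

lemma measurable_mveval {ι : Type*} [Fintype ι] (P : MvPolynomial ι ℝ) :
    Measurable fun x : ι → ℝ => MvPolynomial.eval x P := by
  simp only [MvPolynomial.eval_eq']
  exact Finset.measurable_sum _ fun d _ => by
    apply Measurable.const_mul
    exact Finset.measurable_prod _ fun i _ => ((measurable_pi_apply i).pow_const _)

lemma mvpoly_zero_null_fin :
    ∀ (n : ℕ) (P : MvPolynomial (Fin n) ℝ), P ≠ 0 →
      volume {x : Fin n → ℝ | MvPolynomial.eval x P = 0} = 0 := by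
  intro n
  induction n with
  | zero =>
    intro P hP
    obtain ⟨c, rfl⟩ := MvPolynomial.C_surjective (Fin 0) P
    have hc : c ≠ 0 := fun h => hP (by simp [h])
    have : {x : Fin 0 → ℝ | MvPolynomial.eval x (MvPolynomial.C c) = 0} = ∅ := by
      ext x; simp [hc]
    rw [this]; exact measure_empty
  | succ n ih =>
    intro P hP
    set Q : Polynomial (MvPolynomial (Fin n) ℝ) := MvPolynomial.finSuccEquiv ℝ n P with hQdef
    have hQ : Q ≠ 0 := by
      rw [hQdef]
      exact (map_ne_zero_iff _ (AlgEquiv.injective _)).mpr hP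
    have hc : Q.leadingCoeff ≠ 0 := Polynomial.leadingCoeff_ne_zero.mpr hQ
    have hN : volume {s : Fin n → ℝ | MvPolynomial.eval s Q.leadingCoeff = 0} = 0 := ih _ hc
    -- the set in split coordinates (tail, head)
    set S'' : Set ((Fin n → ℝ) × ℝ) :=
      {q | Polynomial.eval q.2 (Polynomial.map (MvPolynomial.eval q.1) Q) = 0} with hS''def
    have hmeas : MeasurableSet S'' := by
      have : Measurable fun q : (Fin n → ℝ) × ℝ =>
          Polynomial.eval q.2 (Polynomial.map (MvPolynomial.eval q.1) Q) := by
        have heq : ∀ q : (Fin n → ℝ) × ℝ,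
            Polynomial.eval q.2 (Polynomial.map (MvPolynomial.eval q.1) Q)
              = ∑ k ∈ Finset.range (Q.natDegree + 1),
                  MvPolynomial.eval q.1 (Q.coeff k) * q.2 ^ k := by
          intro q
          rw [Polynomial.eval_map, Polynomial.eval₂_eq_sum_range]
        simp only [heq]
        exact Finset.measurable_sum _ fun k _ =>
          ((measurable_mveval _).comp measurable_fst).mul (measurable_snd.pow_const _)
      exact this (measurableSet_singleton 0)
    have hprod : (volume.prod volume) S'' = 0 := by
      rw [Measure.measure_prod_null hmeas]
      have hNc : ∀ᵐ s : (Fin n → ℝ) ∂volume,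
          MvPolynomial.eval s Q.leadingCoeff ≠ 0 := by
        rw [ae_iff]
        simpa using hN
      filter_upwards [hNc] with s hs
      have hq : Polynomial.map (MvPolynomial.eval s) Q ≠ 0 := by
        intro h
        apply hs
        have h2 : (Polynomial.map (MvPolynomial.eval s) Q).coeff Q.natDegree = 0 := by
          rw [h, Polynomial.coeff_zero]
        rw [Polynomial.coeff_map, Polynomial.coeff_natDegree] at h2
        exact h2
      have hfin : Set.Finite {y : ℝ | Polynomial.IsRoot (Polynomial.map (MvPolynomial.eval s) Q) y} :=
        Polynomial.finite_setOf_isRoot hq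
      have hsec : (Prod.mk s ⁻¹' S'') =
          {y : ℝ | Polynomial.IsRoot (Polynomial.map (MvPolynomial.eval s) Q) y} := by
        ext y; simp [hS''def, Polynomial.IsRoot]
      simpa [hsec] using hfin.measure_zero volume
    -- transfer back
    set e := MeasurableEquiv.piFinSuccAbove (fun _ : Fin (n + 1) => ℝ) 0 with hedef
    have hep : MeasurePreserving e volume volume :=
      MeasureTheory.volume_preserving_piFinSuccAbove (fun _ : Fin (n + 1) => ℝ) 0
    have hswap : MeasurePreserving (Prod.swap : ℝ × (Fin n → ℝ) → (Fin n → ℝ) × ℝ)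
        (volume.prod volume) (volume.prod volume) :=
      Measure.measurePreserving_swap
    have hSeq : {x : Fin (n + 1) → ℝ | MvPolynomial.eval x P = 0}
        = e ⁻¹' (Prod.swap ⁻¹' S'') := by
      ext x
      have hex : e x = (x 0, Fin.tail x) := by
        simp [hedef, MeasurableEquiv.piFinSuccAbove]
      simp only [Set.mem_setOf_eq, Set.mem_preimage, hex, Prod.swap_prod_mk, hS''def]
      rw [hQdef, ← MvPolynomial.eval_eq_eval_mv_eval', Fin.cons_self_tail]
    rw [hSeq]
    have hswapmeas : MeasurableSet (Prod.swap ⁻¹' S'' : Set (ℝ × (Fin n → ℝ))) :=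
      hmeas.preimage measurable_swap
    rw [hep.measure_preimage hswapmeas.nullMeasurableSet]
    have : (volume : Measure (ℝ × (Fin n → ℝ))) = volume.prod volume := rfl
    rw [this, hswap.measure_preimage hmeas.nullMeasurableSet]
    exact hprod

lemma mvpoly_zero_null {ι : Type} [Fintype ι] (P : MvPolynomial ι ℝ) (hP : P ≠ 0) :
    volume {x : ι → ℝ | MvPolynomial.eval x P = 0} = 0 := by
  classical
  set n := Fintype.card ι
  set e : ι ≃ Fin n := Fintype.equivFin ι with hedef
  set Em := MeasurableEquiv.piCongrLeft (fun _ : ι => ℝ) e.symm with hEmdef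
  have hmp : MeasurePreserving Em volume volume :=
    MeasureTheory.volume_measurePreserving_piCongrLeft (fun _ : ι => ℝ) e.symm
  have hEm : ∀ (y : Fin n → ℝ) (i : ι), Em y i = y (e i) := by
    intro y i
    have h1 := MeasurableEquiv.piCongrLeft_apply_apply (β := fun _ : ι => ℝ) e.symm y (e i)
    rw [← hEmdef] at h1
    simpa using h1
  have hren : MvPolynomial.rename e P ≠ 0 := fun h =>
    hP (MvPolynomial.rename_injective (R := ℝ) e e.injective (by simpa using h))
  have hpre : Em ⁻¹' {x : ι → ℝ | MvPolynomial.eval x P = 0}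
      = {y : Fin n → ℝ | MvPolynomial.eval y (MvPolynomial.rename e P) = 0} := by
    ext y
    have hy : Em y = fun i => y (e i) := funext fun i => hEm y i
    simp only [Set.mem_preimage, Set.mem_setOf_eq, MvPolynomial.eval_rename, hy]
    rfl
  have hmeasS : MeasurableSet {x : ι → ℝ | MvPolynomial.eval x P = 0} :=
    (measurable_mveval P) (measurableSet_singleton 0)
  rw [← hmp.measure_preimage hmeasS.nullMeasurableSet, hpre]
  exact mvpoly_zero_null_fin n _ hren

end PolyNull

theorem auxiliary_theorem_measure_zero
    (H I : Type) [Fintype H] [Fintype I] [Nonempty H] [Nonempty I] :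
    volume {p : (H × I → ℝ) × (I × H → ℝ) × (H → ℝ) |
      ∃ i j : I,
        (∑ h, p.2.2 h * p.2.1 (j, h)) * (∑ h, p.1 (h, i) * p.2.2 h * p.2.1 (i, h)) =
          (∑ h, p.2.2 h * p.2.1 (i, h)) * (∑ h, p.1 (h, j) * p.2.2 h * p.2.1 (j, h)) ∧
        ∑ h, p.1 (h, i) * p.2.2 h ≠ ∑ h, p.1 (h, j) * p.2.2 h} = 0 := by
  classical
  -- index type of all parameters
  set κ := Sum (H × I) (Sum (I × H) H) with hκdef
  -- the polynomial expressing the cross-multiplied equality, for each pair (i, j)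
  set Qp : I → I → MvPolynomial κ ℝ := fun i j =>
    (∑ h : H, MvPolynomial.X (Sum.inr (Sum.inr h)) * MvPolynomial.X (Sum.inr (Sum.inl (j, h)))) *
      (∑ h : H, MvPolynomial.X (Sum.inl (h, i)) * MvPolynomial.X (Sum.inr (Sum.inr h)) *
        MvPolynomial.X (Sum.inr (Sum.inl (i, h)))) -
    (∑ h : H, MvPolynomial.X (Sum.inr (Sum.inr h)) * MvPolynomial.X (Sum.inr (Sum.inl (i, h)))) *
      (∑ h : H, MvPolynomial.X (Sum.inl (h, j)) * MvPolynomial.X (Sum.inr (Sum.inr h)) *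
        MvPolynomial.X (Sum.inr (Sum.inl (j, h)))) with hQpdef
  -- the packing map and its measure-preservation
  set V : ((H × I → ℝ) × (I × H → ℝ) × (H → ℝ)) → (κ → ℝ) := fun p =>
    (MeasurableEquiv.sumPiEquivProdPi (fun _ : κ => ℝ)).symm
      (p.1, (MeasurableEquiv.sumPiEquivProdPi (fun _ : Sum (I × H) H => ℝ)).symm (p.2.1, p.2.2))
    with hVdef
  have hVmp : MeasurePreserving V volume volume := by
    have h1 := MeasureTheory.volume_measurePreserving_sumPiEquivProdPi_symm
      (fun _ : Sum (I × H) H => ℝ)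
    have h2 := MeasureTheory.volume_measurePreserving_sumPiEquivProdPi_symm (fun _ : κ => ℝ)
    exact h2.comp ((MeasurePreserving.id volume).prod h1)
  have hVval : ∀ p : ((H × I → ℝ) × (I × H → ℝ) × (H → ℝ)),
      (∀ a : H × I, V p (Sum.inl a) = p.1 a) ∧
      (∀ b : I × H, V p (Sum.inr (Sum.inl b)) = p.2.1 b) ∧
      (∀ c : H, V p (Sum.inr (Sum.inr c)) = p.2.2 c) := by
    intro p
    refine ⟨fun a => ?_, fun b => ?_, fun c => ?_⟩ <;>
      simp [hVdef, MeasurableEquiv.sumPiEquivProdPi, Equiv.sumPiEquivProdPi]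
  -- evaluation of Qp at any valuation
  have hevalx : ∀ (x : κ → ℝ) (i j : I),
      MvPolynomial.eval x (Qp i j) =
        (∑ h : H, x (Sum.inr (Sum.inr h)) * x (Sum.inr (Sum.inl (j, h)))) *
          (∑ h : H, x (Sum.inl (h, i)) * x (Sum.inr (Sum.inr h)) * x (Sum.inr (Sum.inl (i, h)))) -
        (∑ h : H, x (Sum.inr (Sum.inr h)) * x (Sum.inr (Sum.inl (i, h)))) *
          (∑ h : H, x (Sum.inl (h, j)) * x (Sum.inr (Sum.inr h)) * x (Sum.inr (Sum.inl (j, h)))) := by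
    intro x i j
    simp [hQpdef, map_sum]
  have heval : ∀ (p : ((H × I → ℝ) × (I × H → ℝ) × (H → ℝ))) (i j : I),
      MvPolynomial.eval (V p) (Qp i j) =
        (∑ h, p.2.2 h * p.2.1 (j, h)) * (∑ h, p.1 (h, i) * p.2.2 h * p.2.1 (i, h)) -
        (∑ h, p.2.2 h * p.2.1 (i, h)) * (∑ h, p.1 (h, j) * p.2.2 h * p.2.1 (j, h)) := by
    intro p i j
    obtain ⟨h1, h2, h3⟩ := hVval p
    rw [hevalx]
    simp only [h1, h2, h3]
  -- each Qp i j with i ≠ j is a nonzero polynomial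
  have hQne : ∀ i j : I, i ≠ j → Qp i j ≠ 0 := by
    intro i j hij hzero
    obtain ⟨h0⟩ := ‹Nonempty H›
    set w : κ → ℝ := fun k =>
      match k with
      | Sum.inl (h, k') => if h = h0 ∧ k' = i then 1 else 0
      | Sum.inr (Sum.inl (_, h)) => if h = h0 then 1 else 0
      | Sum.inr (Sum.inr h) => if h = h0 then 1 else 0
      with hwdef
    have := congrArg (MvPolynomial.eval w) hzero
    rw [map_zero, hevalx] at this
    have hsum1 : ∀ k : I, (∑ h : H, w (Sum.inr (Sum.inr h)) * w (Sum.inr (Sum.inl (k, h)))) = 1 := by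
      intro k
      simp only [hwdef]
      rw [Finset.sum_eq_single h0] <;> simp +contextual
    have hsum2 : ∀ k : I,
        (∑ h : H, w (Sum.inl (h, k)) * w (Sum.inr (Sum.inr h)) * w (Sum.inr (Sum.inl (k, h))))
          = if k = i then 1 else 0 := by
      intro k
      simp only [hwdef]
      rw [Finset.sum_eq_single h0] <;> simp +contextual [eq_comm]
    simp [hsum1, hsum2, Ne.symm hij] at this
  -- the target set is contained in a finite union of null sets
  set S : Set ((H × I → ℝ) × (I × H → ℝ) × (H → ℝ)) :=
    {p | ∃ i j : I,
        (∑ h, p.2.2 h * p.2.1 (j, h)) * (∑ h, p.1 (h, i) * p.2.2 h * p.2.1 (i, h)) =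
          (∑ h, p.2.2 h * p.2.1 (i, h)) * (∑ h, p.1 (h, j) * p.2.2 h * p.2.1 (j, h)) ∧
        ∑ h, p.1 (h, i) * p.2.2 h ≠ ∑ h, p.1 (h, j) * p.2.2 h} with hSdef
  have hsub : S ⊆ ⋃ i : I, ⋃ j : I,
      (if i = j then (∅ : Set ((H × I → ℝ) × (I × H → ℝ) × (H → ℝ)))
        else V ⁻¹' {x : κ → ℝ | MvPolynomial.eval x (Qp i j) = 0}) := by
    intro p hp
    obtain ⟨i, j, heq, hne⟩ := hp
    have hij : i ≠ j := by
      intro h; subst h; exact hne rfl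
    refine Set.mem_iUnion.mpr ⟨i, Set.mem_iUnion.mpr ⟨j, ?_⟩⟩
    rw [if_neg hij]
    show MvPolynomial.eval (V p) (Qp i j) = 0
    rw [heval p i j, heq, sub_self]
  refine measure_mono_null hsub ?_
  refine measure_iUnion_null fun i => measure_iUnion_null fun j => ?_
  by_cases hij : i = j
  · simp [hij]
  · rw [if_neg hij]
    have hmeasZ : MeasurableSet {x : κ → ℝ | MvPolynomial.eval x (Qp i j) = 0} :=
      (measurable_mveval _) (measurableSet_singleton 0)
    rw [hVmp.measure_preimage hmeasZ.nullMeasurableSet]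
    exact mvpoly_zero_null _ (hQne i j hij)
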